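/- Let n ≥ 2 and m ≥ 2 be integers, let μ > 0, R > 0 and let L satisfy L/μ ≥ 2. Set α = √( 2(L/μ − 1)/n + 1 ), q = (α − 1)/(α + 1), and define f_SC : ℝ^m → ℝ by f_SC(x) = ((L − μ)/(4n)) ( Σ_{l=1}^{m−1} (x_l − x_{l+1})² + (2/(α+1)) x_m² ) + (μ/2)‖x‖² − μ R √α · x_1. Then the unique global minimizer of f_SC over ℝ^m is x* = (2R√α/(α − 1)) · (q, q², …, q^m), it satisfies f_SC(x*) = − μ R² α/(α + 1), and ‖x*‖ ≤ R. -/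

import Mathlib

open Finset

lemma fSC_cross (k : ℕ) (β γ μ c K q : ℝ)
    (hγ : γ = 1 - q) (h1 : μ * q = 2 * β * γ ^ 2) (h2 : c = 2 * β * K * γ)
    (h : ℕ → ℝ) :
    2 * β * ((∑ l ∈ range (k+1), (K*q^(l+1) - K*q^(l+2)) * (h l - h (l+1)))
        + γ * (K*q^(k+2)) * h (k+1))
      + μ * (∑ i ∈ range (k+2), (K*q^(i+1)) * h i) - c * h 0 = 0 := by
  subst hγ
  have eA : ∑ l ∈ range (k+1), q^(l+1) * h l
      = q * ((∑ i ∈ range (k+2), q^i * h i) - q^(k+1) * h (k+1)) := by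
    rw [Finset.sum_range_succ (fun i => q^i * h i) (k+1), add_sub_cancel_right, mul_sum]
    apply Finset.sum_congr rfl
    intro l _
    ring
  have eB : ∑ l ∈ range (k+1), q^(l+1) * h (l+1)
      = (∑ i ∈ range (k+2), q^i * h i) - h 0 := by
    rw [Finset.sum_range_succ' (fun i => q^i * h i) (k+1)]
    simp
  have e1 : ∑ l ∈ range (k+1), (K*q^(l+1) - K*q^(l+2)) * (h l - h (l+1))
      = K * (1-q) * ((∑ l ∈ range (k+1), q^(l+1) * h l)
          - (∑ l ∈ range (k+1), q^(l+1) * h (l+1))) := by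
    rw [mul_sub, Finset.mul_sum, Finset.mul_sum, ← Finset.sum_sub_distrib]
    apply Finset.sum_congr rfl
    intro l _
    ring
  have e2 : ∑ i ∈ range (k+2), (K*q^(i+1)) * h i
      = K * q * (∑ i ∈ range (k+2), q^i * h i) := by
    rw [mul_sum]
    apply Finset.sum_congr rfl
    intro i _
    ring
  rw [e1, eA, eB, e2]
  linear_combination (K * (∑ i ∈ range (k+2), q^i * h i)) * h1 - h 0 * h2

lemma fSC_key (k : ℕ) (β γ μ c K q : ℝ)
    (hγ : γ = 1 - q) (h1 : μ * q = 2 * β * γ ^ 2) (h2 : c = 2 * β * K * γ)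
    (u : ℕ → ℝ) :
    β * ((∑ l ∈ range (k+1), (u l - u (l+1))^2) + γ * (u (k+1))^2)
      + (μ/2) * (∑ i ∈ range (k+2), (u i)^2) - c * u 0
    = (β * ((∑ l ∈ range (k+1), (K*q^(l+1) - K*q^(l+2))^2) + γ * (K*q^(k+2))^2)
        + (μ/2) * (∑ i ∈ range (k+2), (K*q^(i+1))^2) - c * (K*q))
      + β * ((∑ l ∈ range (k+1), ((u l - K*q^(l+1)) - (u (l+1) - K*q^(l+2)))^2)
          + γ * (u (k+1) - K*q^(k+2))^2)
      + (μ/2) * (∑ i ∈ range (k+2), (u i - K*q^(i+1))^2) := by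
  have hc := fSC_cross k β γ μ c K q hγ h1 h2 (fun i => u i - K*q^(i+1))
  have e : ∀ l : ℕ, l + 1 + 1 = l + 2 := fun l => rfl
  simp only [e] at hc
  have hd : ∑ l ∈ range (k+1), (u l - u (l+1))^2
      = (∑ l ∈ range (k+1), (K*q^(l+1) - K*q^(l+2))^2)
        + ((∑ l ∈ range (k+1), 2*((K*q^(l+1) - K*q^(l+2)) * ((u l - K*q^(l+1)) - (u (l+1) - K*q^(l+2)))))
        + ∑ l ∈ range (k+1), ((u l - K*q^(l+1)) - (u (l+1) - K*q^(l+2)))^2) := by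
    rw [← Finset.sum_add_distrib, ← Finset.sum_add_distrib]
    apply Finset.sum_congr rfl
    intro l _
    ring
  have hs : ∑ i ∈ range (k+2), (u i)^2
      = (∑ i ∈ range (k+2), (K*q^(i+1))^2)
        + ((∑ i ∈ range (k+2), 2*((K*q^(i+1)) * (u i - K*q^(i+1))))
        + ∑ i ∈ range (k+2), (u i - K*q^(i+1))^2) := by
    rw [← Finset.sum_add_distrib, ← Finset.sum_add_distrib]
    apply Finset.sum_congr rfl
    intro i _
    ring
  have hd2 : ∑ l ∈ range (k+1), 2*((K*q^(l+1) - K*q^(l+2)) * ((u l - K*q^(l+1)) - (u (l+1) - K*q^(l+2))))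
      = 2 * ∑ l ∈ range (k+1), (K*q^(l+1) - K*q^(l+2)) * ((u l - K*q^(l+1)) - (u (l+1) - K*q^(l+2))) := by
    rw [Finset.mul_sum]
  have hs2 : ∑ i ∈ range (k+2), 2*((K*q^(i+1)) * (u i - K*q^(i+1)))
      = 2 * ∑ i ∈ range (k+2), (K*q^(i+1)) * (u i - K*q^(i+1)) := by
    rw [Finset.mul_sum]
  rw [hd, hs, hd2, hs2]
  linear_combination hc

def eY {N : ℕ} (x : EuclideanSpace ℝ (Fin N)) (i : ℕ) : ℝ :=
  if hi : i < N then x ⟨i, hi⟩ else 0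

lemma eY_lt {N : ℕ} (x : EuclideanSpace ℝ (Fin N)) {i : ℕ} (hi : i < N) :
    eY x i = x ⟨i, hi⟩ := dif_pos hi

lemma norm_sq_eY {N : ℕ} (x : EuclideanSpace ℝ (Fin N)) :
    ‖x‖^2 = ∑ i ∈ Finset.range N, (eY x i)^2 := by
  rw [EuclideanSpace.norm_eq, Real.sq_sqrt (by positivity),
    ← Fin.sum_univ_eq_sum_range (fun i => (eY x i)^2) N]
  apply Finset.sum_congr rfl
  intro i _
  rw [eY_lt x i.isLt]
  simp [Real.norm_eq_abs, sq_abs]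

set_option maxHeartbeats 1600000 in
/-- The strongly convex hard instance `f_SC` has unique global minimizer
`x* = (2R√α/(α−1))(q, q², …, q^m)`, with `f_SC(x*) = −μR²α/(α+1)` and `‖x*‖ ≤ R`. -/
theorem fSC_minimizer
    (n m : ℕ) (hn : 2 ≤ n) (hm : 2 ≤ m)
    (L μ R : ℝ) (hμ : 0 < μ) (hR : 0 < R) (hL : 2 ≤ L / μ)
    (α q : ℝ) (hα : α = Real.sqrt (2 * (L / μ - 1) / n + 1)) (hq : q = (α - 1) / (α + 1))
    (f : EuclideanSpace ℝ (Fin m) → ℝ)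
    (hf : ∀ x, f x =
      ((L - μ) / (4 * n)) *
        ((∑ l : Fin (m - 1),
            (x (Fin.castLE (by omega) l) - x (Fin.cast (by omega : m - 1 + 1 = m) l.succ)) ^ 2)
          + (2 / (α + 1)) * (x ⟨m - 1, by omega⟩) ^ 2)
      + (μ / 2) * ‖x‖ ^ 2 - μ * R * Real.sqrt α * x ⟨0, by omega⟩)
    (xs : EuclideanSpace ℝ (Fin m))
    (hxs : ∀ i : Fin m, xs i = (2 * R * Real.sqrt α / (α - 1)) * q ^ ((i : ℕ) + 1)) :
    (∀ x, f xs ≤ f x) ∧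
    (∀ x, (∀ w, f x ≤ f w) → x = xs) ∧
    f xs = -(μ * R ^ 2 * α / (α + 1)) ∧
    ‖xs‖ ≤ R := by
  obtain ⟨k, rfl⟩ : ∃ k, m = k + 2 := ⟨m - 2, by omega⟩
  have hn0 : (0:ℝ) < (n:ℝ) := by
    have : 0 < n := by omega
    exact_mod_cast this
  have hμL : μ < L := by
    have h2 : 2 * μ ≤ L := by
      have := (le_div_iff₀ hμ).1 hL
      linarith
    linarith
  have harg : (1:ℝ) < 2 * (L / μ - 1) / n + 1 := by
    have h2 : (1:ℝ) ≤ L / μ - 1 := by linarith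
    have : 0 < 2 * (L / μ - 1) / n := by positivity
    linarith
  have hα2 : α ^ 2 = 2 * (L / μ - 1) / n + 1 := by
    rw [hα]; exact Real.sq_sqrt (by linarith)
  have hα0 : 0 ≤ α := hα ▸ Real.sqrt_nonneg _
  have hα1 : 1 < α := by nlinarith
  have hsa : (Real.sqrt α) ^ 2 = α := Real.sq_sqrt (by linarith)
  have hsa0 : 0 < Real.sqrt α := Real.sqrt_pos.2 (by linarith)
  have ha1 : α + 1 ≠ 0 := by intro h; nlinarith
  have ha2 : α - 1 ≠ 0 := by intro h; nlinarith
  have hq0 : 0 < q := by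
    rw [hq]; exact div_pos (by linarith) (by linarith)
  have hq1 : q < 1 := by
    rw [hq, div_lt_one (by linarith)]; linarith
  have hLμ : μ * n * (α ^ 2 - 1) = 2 * (L - μ) := by
    field_simp at hα2
    linear_combination hα2
  have hγ : (2 / (α + 1) : ℝ) = 1 - q := by
    rw [hq]; field_simp; ring
  have h1 : μ * q = 2 * ((L - μ) / (4 * (n:ℝ))) * (2 / (α + 1)) ^ 2 := by
    rw [hq]
    field_simp
    ring_nf
    linear_combination 4*hLμ
  have h2 : μ * R * Real.sqrt α
      = 2 * ((L - μ) / (4 * (n:ℝ))) * (2 * R * Real.sqrt α / (α - 1)) * (2 / (α + 1)) := by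
    field_simp
    ring_nf
    linear_combination 4*hLμ
  have hβ0 : (0:ℝ) ≤ (L - μ) / (4 * (n:ℝ)) := div_nonneg (by linarith) (by positivity)
  have hγ0 : (0:ℝ) ≤ 2 / (α + 1) := le_of_lt (div_pos (by norm_num) (by linarith))
  -- conversion of f to range-sum form
  have hfF : ∀ x : EuclideanSpace ℝ (Fin (k + 2)), f x =
      ((L - μ) / (4 * (n:ℝ))) *
        ((∑ l ∈ range (k+1), (eY x l - eY x (l+1))^2) + (2 / (α + 1)) * (eY x (k+1))^2)
      + (μ / 2) * (∑ i ∈ range (k+2), (eY x i)^2)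
      - (μ * R * Real.sqrt α) * (eY x 0) := by
    intro x
    rw [hf x, norm_sq_eY x]
    have hS : (∑ l : Fin (k + 2 - 1),
          (x (Fin.castLE (by omega) l) - x (Fin.cast (by omega : k + 2 - 1 + 1 = k + 2) l.succ)) ^ 2)
        = ∑ l ∈ range (k+1), (eY x l - eY x (l+1))^2 := by
      rw [← Fin.sum_univ_eq_sum_range (fun l => (eY x l - eY x (l+1))^2) (k+1)]
      apply Finset.sum_congr rfl
      intro l _
      have hl1 : (l:ℕ) < k + 2 := by omega
      have hl2 : (l:ℕ) + 1 < k + 2 := by omega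
      rw [eY_lt x hl1, eY_lt x hl2]
      rfl
    have hT : x ⟨k + 2 - 1, by omega⟩ = eY x (k+1) := (eY_lt x (by omega)).symm
    have h0 : x ⟨0, by omega⟩ = eY x 0 := (eY_lt x (by omega)).symm
    rw [hS, hT, h0]
  have hYxs : ∀ i : ℕ, i < k + 2 →
      eY xs i = (2 * R * Real.sqrt α / (α - 1)) * q ^ (i + 1) := by
    intro i hi
    rw [eY_lt xs hi, hxs ⟨i, hi⟩]
  have hA : ∑ l ∈ range (k+1), (eY xs l - eY xs (l+1))^2
      = ∑ l ∈ range (k+1), ((2 * R * Real.sqrt α / (α - 1)) * q ^ (l+1)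
          - (2 * R * Real.sqrt α / (α - 1)) * q ^ (l+2))^2 := by
    apply Finset.sum_congr rfl
    intro l hl
    have hl' := Finset.mem_range.mp hl
    rw [hYxs l (by omega), hYxs (l+1) (by omega)]
  have hB : eY xs (k+1) = (2 * R * Real.sqrt α / (α - 1)) * q ^ (k+2) :=
    hYxs (k+1) (by omega)
  have hC : ∑ i ∈ range (k+2), (eY xs i)^2
      = ∑ i ∈ range (k+2), ((2 * R * Real.sqrt α / (α - 1)) * q ^ (i+1))^2 := by
    apply Finset.sum_congr rfl
    intro i hi
    have hi' := Finset.mem_range.mp hi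
    rw [hYxs i (by omega)]
  have hD : eY xs 0 = (2 * R * Real.sqrt α / (α - 1)) * q := by
    rw [hYxs 0 (by omega)]
    norm_num
  have key := fSC_key k ((L - μ) / (4 * (n:ℝ))) (2 / (α + 1)) μ (μ * R * Real.sqrt α)
      (2 * R * Real.sqrt α / (α - 1)) q hγ h1 h2
  -- part 1 : minimality
  have hmain : ∀ x, f xs ≤ f x := by
    intro x
    rw [hfF x, hfF xs, hA, hB, hC, hD, key (eY x)]
    have hP1 : (0:ℝ) ≤ (∑ l ∈ range (k+1),
        ((eY x l - (2 * R * Real.sqrt α / (α - 1)) * q ^ (l+1))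
          - (eY x (l+1) - (2 * R * Real.sqrt α / (α - 1)) * q ^ (l+2)))^2)
        + (2 / (α + 1)) * (eY x (k+1) - (2 * R * Real.sqrt α / (α - 1)) * q ^ (k+2))^2 :=
      add_nonneg (Finset.sum_nonneg fun l _ => sq_nonneg _) (mul_nonneg hγ0 (sq_nonneg _))
    have hP2 : (0:ℝ) ≤ ∑ i ∈ range (k+2),
        (eY x i - (2 * R * Real.sqrt α / (α - 1)) * q ^ (i+1))^2 :=
      Finset.sum_nonneg fun i _ => sq_nonneg _
    nlinarith [mul_nonneg hβ0 hP1, mul_nonneg (by linarith : (0:ℝ) ≤ μ / 2) hP2]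
  refine ⟨hmain, ?_, ?_, ?_⟩
  · -- uniqueness
    intro x hx
    have hfeq : f x = f xs := le_antisymm (hx xs) (hmain x)
    have hkx := key (eY x)
    rw [hfF x, hfF xs, hA, hB, hC, hD] at hfeq
    have hP1 : (0:ℝ) ≤ (∑ l ∈ range (k+1),
        ((eY x l - (2 * R * Real.sqrt α / (α - 1)) * q ^ (l+1))
          - (eY x (l+1) - (2 * R * Real.sqrt α / (α - 1)) * q ^ (l+2)))^2)
        + (2 / (α + 1)) * (eY x (k+1) - (2 * R * Real.sqrt α / (α - 1)) * q ^ (k+2))^2 :=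
      add_nonneg (Finset.sum_nonneg fun l _ => sq_nonneg _) (mul_nonneg hγ0 (sq_nonneg _))
    have hP2 : (0:ℝ) ≤ ∑ i ∈ range (k+2),
        (eY x i - (2 * R * Real.sqrt α / (α - 1)) * q ^ (i+1))^2 :=
      Finset.sum_nonneg fun i _ => sq_nonneg _
    have hB0 : ∑ i ∈ range (k+2),
        (eY x i - (2 * R * Real.sqrt α / (α - 1)) * q ^ (i+1))^2 = 0 := by
      nlinarith [mul_nonneg hβ0 hP1]
    have hterm := (Finset.sum_eq_zero_iff_of_nonneg
      (fun i (_ : i ∈ range (k+2)) => sq_nonneg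
        (eY x i - (2 * R * Real.sqrt α / (α - 1)) * q ^ (i+1)))).mp hB0
    ext i
    have hi := hterm i (Finset.mem_range.mpr i.isLt)
    have := sub_eq_zero.mp ((pow_eq_zero_iff (two_ne_zero)).mp hi)
    rw [eY_lt x i.isLt] at this
    rw [hxs i]
    exact this
  · -- value at minimizer
    have hcs := fSC_cross k ((L - μ) / (4 * (n:ℝ))) (2 / (α + 1)) μ (μ * R * Real.sqrt α)
        (2 * R * Real.sqrt α / (α - 1)) q hγ h1 h2
        (fun i => (2 * R * Real.sqrt α / (α - 1)) * q ^ (i+1))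
    have e : ∀ l : ℕ, l + 1 + 1 = l + 2 := fun l => rfl
    simp only [e, zero_add, pow_one] at hcs
    have es1 : ∑ l ∈ range (k+1),
        ((2 * R * Real.sqrt α / (α - 1)) * q ^ (l+1) - (2 * R * Real.sqrt α / (α - 1)) * q ^ (l+2))
          * ((2 * R * Real.sqrt α / (α - 1)) * q ^ (l+1) - (2 * R * Real.sqrt α / (α - 1)) * q ^ (l+2))
        = ∑ l ∈ range (k+1),
          ((2 * R * Real.sqrt α / (α - 1)) * q ^ (l+1) - (2 * R * Real.sqrt α / (α - 1)) * q ^ (l+2))^2 :=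
      Finset.sum_congr rfl fun l _ => by ring
    have es2 : ∑ i ∈ range (k+2),
        ((2 * R * Real.sqrt α / (α - 1)) * q ^ (i+1)) * ((2 * R * Real.sqrt α / (α - 1)) * q ^ (i+1))
        = ∑ i ∈ range (k+2), ((2 * R * Real.sqrt α / (α - 1)) * q ^ (i+1))^2 :=
      Finset.sum_congr rfl fun i _ => by ring
    rw [es1, es2] at hcs
    have hval : (μ * R * Real.sqrt α) * ((2 * R * Real.sqrt α / (α - 1)) * q)
        = 2 * μ * R ^ 2 * α / (α + 1) := by
      rw [hq]
      field_simp
      ring_nf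
      linear_combination hsa
    rw [hfF xs, hA, hB, hC, hD]
    linear_combination hcs / 2 - hval / 2
  · -- norm bound
    have hnx : ‖xs‖^2 = ∑ i ∈ range (k+2), ((2 * R * Real.sqrt α / (α - 1)) * q ^ (i+1))^2 := by
      rw [norm_sq_eY xs, hC]
    have hgeo : ∑ i ∈ range (k+2), ((2 * R * Real.sqrt α / (α - 1)) * q ^ (i+1))^2
        = (2 * R * Real.sqrt α / (α - 1))^2 * q^2 * ∑ i ∈ range (k+2), (q^2)^i := by
      rw [Finset.mul_sum]
      apply Finset.sum_congr rfl
      intro i _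
      ring
    have hq2lt : q^2 < 1 := by nlinarith
    have hgs : ∑ i ∈ range (k+2), (q^2)^i = ((q^2)^(k+2) - 1)/(q^2 - 1) :=
      geom_sum_eq (ne_of_lt hq2lt) _
    have hKq2 : (2 * R * Real.sqrt α / (α - 1))^2 * q^2 = R^2 * (1 - q^2) := by
      rw [hq]
      field_simp
      ring_nf
      linear_combination 4*hsa
    have hpow0 : (0:ℝ) ≤ (q^2)^(k+2) := by positivity
    have hsq : ‖xs‖^2 ≤ R^2 := by
      rw [hnx, hgeo, hgs, hKq2]
      have hne : q^2 - 1 ≠ 0 := by intro h; nlinarith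
      have heq : R^2 * (1 - q^2) * (((q^2)^(k+2) - 1)/(q^2 - 1))
          = R^2 * (1 - (q^2)^(k+2)) := by
        field_simp
        ring
      rw [heq]
      nlinarith
    nlinarith [norm_nonneg xs]
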